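/- The function V(x₀, x₁) = 10x₀² + 2x₀x₁² + 3x₁⁴ + 6x₁² satisfies V(0) = 0, V(x) > 0 for all x ≠ 0 (via the identity V = 9x₀² + (x₀ + x₁²)² + 2x₁⁴ + 6x₁²), and ∇V(x)·f(x) = -x₁²(116x₁² + 120) ≤ 0 for the system ẋ₀ = 2x₁², ẋ₁ = -10x₁; hence V is a global Lyapunov function for this system. -/

import Mathlib

open Filter InnerProductSpace

/-- `V = 10x₀² + 2x₀x₁² + 3x₁⁴ + 6x₁²` is a global Lyapunov function for the
system `ẋ₀ = 2x₁², ẋ₁ = -10x₁`. -/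
theorem lyapunov_nondiagonal_example
    (V : EuclideanSpace ℝ (Fin 2) → ℝ)
    (hV : ∀ x, V x = 10 * (x 0) ^ 2 + 2 * (x 0) * (x 1) ^ 2
      + 3 * (x 1) ^ 4 + 6 * (x 1) ^ 2)
    (f : EuclideanSpace ℝ (Fin 2) → EuclideanSpace ℝ (Fin 2))
    (hf : ∀ x, f x 0 = 2 * (x 1) ^ 2 ∧ f x 1 = -10 * (x 1)) :
    V 0 = 0 ∧
    (∀ x, V x = 9 * (x 0) ^ 2 + (x 0 + (x 1) ^ 2) ^ 2
      + 2 * (x 1) ^ 4 + 6 * (x 1) ^ 2) ∧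
    (∀ x, x ≠ 0 → 0 < V x) ∧
    Tendsto V (comap norm atTop) atTop ∧
    ∀ x, (∑ i, gradient V x i * f x i
        = -(x 1) ^ 2 * (116 * (x 1) ^ 2 + 120)) ∧
      ∑ i, gradient V x i * f x i ≤ 0 := by
  have key : ∀ x : EuclideanSpace ℝ (Fin 2),
      V x = 9 * (x 0) ^ 2 + (x 0 + (x 1) ^ 2) ^ 2 + 2 * (x 1) ^ 4 + 6 * (x 1) ^ 2 := by
    intro x; rw [hV]; ring
  have hgrad : ∀ x : EuclideanSpace ℝ (Fin 2),
      HasGradientAt V ((WithLp.equiv 2 (Fin 2 → ℝ)).symm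
        ![20 * x 0 + 2 * (x 1) ^ 2,
          4 * x 0 * x 1 + 12 * (x 1) ^ 3 + 12 * x 1]) x := by
    intro x
    rw [hasGradientAt_iff_hasFDerivAt]
    have hVeq : V = fun y : EuclideanSpace ℝ (Fin 2) =>
        10 * (y 0 * y 0) + 2 * y 0 * (y 1 * y 1)
          + 3 * (y 1 * y 1 * (y 1 * y 1)) + 6 * (y 1 * y 1) :=
      funext fun y => by rw [hV]; ring
    rw [hVeq]
    let p0 : EuclideanSpace ℝ (Fin 2) →L[ℝ] ℝ := EuclideanSpace.proj 0
    let p1 : EuclideanSpace ℝ (Fin 2) →L[ℝ] ℝ := EuclideanSpace.proj 1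
    have h0 : HasFDerivAt (fun y : EuclideanSpace ℝ (Fin 2) => y 0) p0 x :=
      p0.hasFDerivAt
    have h1 : HasFDerivAt (fun y : EuclideanSpace ℝ (Fin 2) => y 1) p1 x :=
      p1.hasFDerivAt
    have hD := ((((h0.mul h0).const_mul 10).add
        ((h0.const_mul 2).mul (h1.mul h1))).add
        (((h1.mul h1).mul (h1.mul h1)).const_mul 3)).add
        ((h1.mul h1).const_mul 6)
    refine hD.congr_fderiv ?_
    apply ContinuousLinearMap.ext
    intro y
    simp [toDual_apply_apply, PiLp.inner_apply, Fin.sum_univ_two, RCLike.inner_apply,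
      PiLp.proj_apply, p0, p1, WithLp.equiv_symm_apply, PiLp.toLp_apply]
    ring
  have hgval : ∀ x : EuclideanSpace ℝ (Fin 2),
      gradient V x 0 = 20 * x 0 + 2 * (x 1) ^ 2 ∧
      gradient V x 1 = 4 * x 0 * x 1 + 12 * (x 1) ^ 3 + 12 * x 1 := by
    intro x
    rw [(hgrad x).gradient]
    constructor <;> simp [WithLp.equiv_symm_apply, PiLp.toLp_apply]
  refine ⟨?_, key, ?_, ?_, ?_⟩
  · rw [hV]; norm_num
  · intro x hx
    rw [key]
    have h01 : x 0 ≠ 0 ∨ x 1 ≠ 0 := by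
      by_contra h
      push_neg at h
      exact hx (by ext i; fin_cases i <;> simp [h.1, h.2])
    rcases h01 with h | h <;> positivity
  · have hn : Tendsto (fun x : EuclideanSpace ℝ (Fin 2) => 6 * ‖x‖ ^ 2)
        (comap norm atTop) atTop := by
      exact ((tendsto_pow_atTop two_ne_zero).comp tendsto_comap).const_mul_atTop (by norm_num)
    refine tendsto_atTop_mono (fun x => ?_) hn
    have hns : ‖x‖ ^ 2 = (x 0) ^ 2 + (x 1) ^ 2 := by
      rw [EuclideanSpace.norm_eq, Real.sq_sqrt (by positivity)]
      simp [Fin.sum_univ_two, sq_abs]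
    rw [key, hns]
    nlinarith [sq_nonneg (x 0), sq_nonneg (x 0 + (x 1)^2), sq_nonneg ((x 1)^2), sq_nonneg (x 1)]
  · intro x
    obtain ⟨hg0, hg1⟩ := hgval x
    obtain ⟨hf0, hf1⟩ := hf x
    constructor
    · rw [Fin.sum_univ_two, hg0, hg1, hf0, hf1]; ring
    · rw [Fin.sum_univ_two, hg0, hg1, hf0, hf1]; nlinarith [sq_nonneg (x 1), sq_nonneg ((x 1)^2)]
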